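/- Let a > 0 be a real number and define K_a : ℂ → ℝ by K_a(ξ) = −4 + 8a²·(1 + a²|ξ|² + |ξ|⁴)³/(a² + 4|ξ|² + a²|ξ|⁴)³. Then K_a is a constant function on ℂ if and only if a = √2; in that case K_a ≡ −2. -/

import Mathlib

open Complex

/-- The Gaussian curvature
`K_a(ξ) = −4 + 8a²(1 + a²|ξ|² + |ξ|⁴)³/(a² + 4|ξ|² + a²|ξ|⁴)³` of the surface obtained
from the holomorphic `ℂP²` solution `W₁ = aξ`, `W₂ = ξ²` is constant iff `a = √2`, in
which case it is identically `−2`. -/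
theorem curvature_constant_iff_sqrt_two (a : ℝ) (ha : 0 < a)
    (K : ℂ → ℝ)
    (hK : K = fun ξ => -4 + 8 * a ^ 2
      * (1 + a ^ 2 * ‖ξ‖ ^ 2 + ‖ξ‖ ^ 4) ^ 3
      / (a ^ 2 + 4 * ‖ξ‖ ^ 2 + a ^ 2 * ‖ξ‖ ^ 4) ^ 3) :
    ((∃ c : ℝ, ∀ ξ : ℂ, K ξ = c) ↔ a = Real.sqrt 2) ∧
    (a = Real.sqrt 2 → ∀ ξ : ℂ, K ξ = -2) := by
  have back : a = Real.sqrt 2 → ∀ ξ : ℂ, K ξ = -2 := by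
    intro h ξ
    have ha2 : a ^ 2 = 2 := by rw [h]; exact Real.sq_sqrt (by norm_num)
    subst hK
    simp only
    set r := ‖ξ‖ with hr
    have hrp : (0:ℝ) < 1 + r ^ 2 := by positivity
    rw [ha2]
    have hden : (2 : ℝ) + 4 * r ^ 2 + 2 * r ^ 4 = 2 * (1 + r ^ 2) ^ 2 := by ring
    have hnum : (1 : ℝ) + 2 * r ^ 2 + r ^ 4 = (1 + r ^ 2) ^ 2 := by ring
    rw [hden, hnum]
    field_simp
    ring
  refine ⟨⟨?_, fun h => ⟨-2, back h⟩⟩, back⟩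
  rintro ⟨c, hc⟩
  have h0 := hc 0
  have h1 := hc 1
  rw [hK] at h0 h1
  simp only [norm_zero, norm_one] at h0 h1
  norm_num at h0 h1
  have ha2 : (0:ℝ) < a ^ 2 := by positivity
  have key : a ^ 2 = 2 := by
    have e : (-4:ℝ) + 8 * a ^ 2 / (a ^ 2) ^ 3 = -4 + 8 * a ^ 2 * (1 + a ^ 2 + 1) ^ 3 / (a ^ 2 + 4 + a ^ 2) ^ 3 := by
      rw [h0, h1]
    have hd : (0:ℝ) < (a ^ 2 + 4 + a ^ 2) ^ 3 := by positivity
    have hd2 : (0:ℝ) < (a ^ 2) ^ 3 := by positivity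
    field_simp at e
    have e2 : 8 * (a ^ 2 + 2) ^ 3 * (8 * a ^ 2 - a ^ 8) = 0 := by linear_combination a ^ 2 * e
    have hp : (0:ℝ) < 8 * (a ^ 2 + 2) ^ 3 := by positivity
    have e3 : 8 * a ^ 2 - a ^ 8 = 0 := by
      rcases mul_eq_zero.mp e2 with h | h
      · exact absurd h hp.ne'
      · exact h
    have e4 : a ^ 2 * (a ^ 6 - 8) = 0 := by linear_combination -e3
    have e5 : a ^ 6 = 8 := by
      rcases mul_eq_zero.mp e4 with h | h
      · exact absurd h ha2.ne'
      · linarith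
    have e6 : (a ^ 2 - 2) * (a ^ 4 + 2 * a ^ 2 + 4) = 0 := by linear_combination e5
    have hq : (0:ℝ) < a ^ 4 + 2 * a ^ 2 + 4 := by positivity
    rcases mul_eq_zero.mp e6 with h | h
    · linarith
    · exact absurd h hq.ne'
  have : a = Real.sqrt (a ^ 2) := (Real.sqrt_sq ha.le).symm
  rw [this, key]
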